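/- Let U = ℤ, let L_∞ = ℤ and, for each i ∈ ℤ, let L_i = ℤ \ {i}, and let C = {L_∞} ∪ {L_i : i ∈ ℤ}. Then no algorithm generates with breadth in the limit from C. -/

import Mathlib

/-!
STATEMENT 7: Let U = ℤ, L_∞ = ℤ, and for i ∈ ℤ let L_i = ℤ \ {i};
C = {L_∞} ∪ {L_i : i ∈ ℤ}.  Then no algorithm generates with breadth in the limit
from C.
-/

/-- `x` is an enumeration of the language `K`. -/
def IsEnumerationOf {U : Type} (K : Set U) (x : ℕ → U) : Prop :=
  (∀ t, x t ∈ K) ∧ ∀ w ∈ K, ∃ t, x t = w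

/-- The input prefix `(x_1, ..., x_t)` as a list. -/
def inputList {U : Type} (x : ℕ → U) (t : ℕ) : List U :=
  List.ofFn (fun i : Fin t => x i)

/-- `Z_{≥t}`: the distinct strings in `G_t(1), G_t(2), ...`. -/
def ZgeSet {U : Type} (A : List U → ℕ → U) (x : ℕ → U) (t : ℕ) : Set U :=
  Set.range (A (inputList x t))

/-- The algorithm `A` generates with breadth in the limit from the collection `C`. -/
def GeneratesWithBreadth {U : Type} (A : List U → ℕ → U) (C : Set (Set U)) : Prop :=
  ∀ K ∈ C, ∀ x : ℕ → U, IsEnumerationOf K x →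
    ∃ tstar : ℕ, ∀ t : ℕ, tstar ≤ t → ZgeSet A x t = K

/-- The collection C = {ℤ} ∪ {ℤ \ {i} : i ∈ ℤ}. -/
def Ccomp : Set (Set ℤ) :=
  insert (Set.univ : Set ℤ) (Set.range fun i : ℤ => ({i}ᶜ : Set ℤ))

noncomputable def eZ : ℕ → ℤ := (Denumerable.eqv ℤ).symm

lemma eZ_surj : Function.Surjective eZ := (Denumerable.eqv ℤ).symm.surjective

noncomputable def gZ (i : ℤ) (n : ℕ) : ℤ := if eZ n = i then i + 1 else eZ n

lemma gZ_ne (i : ℤ) (n : ℕ) : gZ i n ≠ i := by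
  unfold gZ; split
  · omega
  · assumption

lemma gZ_surj (i : ℤ) (w : ℤ) (hw : w ≠ i) : ∃ n, gZ i n = w := by
  obtain ⟨n, hn⟩ := eZ_surj w
  exact ⟨n, by unfold gZ; rw [hn, if_neg hw]⟩

lemma step_exists (A : List ℤ → ℕ → ℤ) (hA : GeneratesWithBreadth A Ccomp)
    (p : List ℤ) :
    ∃ q : List ℤ, p <+: q ∧ p.length < q.length ∧ ∃ i : ℤ,
      Set.range (A q) = ({i}ᶜ : Set ℤ) := by
  obtain ⟨i, hi⟩ := Infinite.exists_notMem_finset p.toFinset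
  rw [List.mem_toFinset] at hi
  set y : ℕ → ℤ := fun t => if h : t < p.length then p.get ⟨t, h⟩ else gZ i (t - p.length)
    with hy
  have henum : IsEnumerationOf ({i}ᶜ : Set ℤ) y := by
    constructor
    · intro t
      simp only [hy, Set.mem_compl_iff, Set.mem_singleton_iff]
      split
      · next h' => intro h; exact hi (h ▸ p.get_mem ⟨t, h'⟩)
      · exact gZ_ne i _
    · intro w hw
      obtain ⟨n, hn⟩ := gZ_surj i w (by simpa using hw)
      refine ⟨p.length + n, ?_⟩
      simp [hy, hn]
  obtain ⟨tstar, hT⟩ := hA ({i}ᶜ) (Or.inr ⟨i, rfl⟩) y henum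
  set T := max tstar (p.length + 1) with hTdef
  refine ⟨inputList y T, ?_, ?_, i, ?_⟩
  · have htake : (inputList y T).take p.length = p := by
      apply List.ext_getElem
      · simp [inputList]; omega
      · intro j h1 h2
        have h1' : j < p.length ∧ j < T := by simpa [inputList] using h1
        have hj := h1'.1
        have hjT := h1'.2
        simp [inputList, hj, hjT, hy]
    exact htake ▸ List.take_prefix _ _
  · simp [inputList, hTdef]
  · exact hT T (le_max_left _ _)

theorem no_generation_with_breadth_for_complement_collection :
    ¬ ∃ A : List ℤ → ℕ → ℤ, GeneratesWithBreadth A Ccomp := by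
  rintro ⟨A, hA⟩
  choose q hpre hlen i hZ using step_exists A hA
  -- the stages
  let P : ℕ → List ℤ := fun n => Nat.rec ([] : List ℤ) (fun n pn => q (pn ++ [eZ n])) n
  have hPsucc : ∀ n, P (n + 1) = q (P n ++ [eZ n]) := fun n => rfl
  have hPlen : ∀ n, (P n).length + 1 < (P (n + 1)).length := by
    intro n
    have := hlen (P n ++ [eZ n])
    simpa [hPsucc] using this
  have hPmono : ∀ n, P n <+: P (n + 1) := by
    intro n
    have h1 : P n <+: P n ++ [eZ n] := List.prefix_append _ _
    exact h1.trans (hpre _)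
  have hPchain : ∀ m n, m ≤ n → P m <+: P n := by
    intro m n h
    induction n with
    | zero => simp [Nat.le_zero.mp h]
    | succ k ih =>
      rcases Nat.lt_or_ge m (k+1) with h' | h'
      · exact (ih (Nat.lt_succ_iff.mp h')).trans (hPmono k)
      · have : m = k + 1 := le_antisymm h h'
        simp [this]
  have hPge : ∀ n, n ≤ (P n).length := by
    intro n
    induction n with
    | zero => simp
    | succ k ih => have := hPlen k; omega
  -- consistent values
  have hconsist : ∀ m n t (h1 : t < (P m).length) (h2 : t < (P n).length),
      (P m)[t] = (P n)[t] := by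
    intro m n t h1 h2
    rcases le_total m n with h | h
    · exact (hPchain m n h).getElem h1
    · exact ((hPchain n m h).getElem h2).symm
  -- the limit sequence
  let x : ℕ → ℤ := fun t => (P (t + 1))[t]'(lt_of_lt_of_le (Nat.lt_succ_self t) (hPge (t+1)))
  have hx : ∀ n t (h : t < (P n).length), x t = (P n)[t] := by
    intro n t h
    exact hconsist (t+1) n t _ h
  have hinp : ∀ n, inputList x ((P n).length) = P n := by
    intro n
    apply List.ext_getElem
    · simp [inputList]
    · intro j h1 h2
      have hj : j < (P n).length := by simpa [inputList] using h1
      simp only [inputList, List.getElem_ofFn]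
      exact hx n j hj
  -- x enumerates ℤ
  have henum : IsEnumerationOf (Set.univ : Set ℤ) x := by
    refine ⟨fun t => trivial, fun w _ => ?_⟩
    obtain ⟨n, hn⟩ := eZ_surj w
    have hmem : (P n ++ [eZ n])[(P n).length]'(by simp) = eZ n := by simp
    have hpref : P n ++ [eZ n] <+: P (n + 1) := hPsucc n ▸ hpre _
    have hlt : (P n).length < (P (n+1)).length := by have := hPlen n; omega
    have : (P (n+1))[(P n).length]'hlt = eZ n := by
      rw [← hpref.getElem (by simp)]; exact hmem
    exact ⟨(P n).length, by rw [hx (n+1) _ hlt, this, hn]⟩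
  obtain ⟨tstar, hT⟩ := hA Set.univ (Or.inl rfl) x henum
  -- contradiction at stage n = tstar
  set n := tstar
  have hTn : tstar ≤ (P (n + 1)).length := le_trans (Nat.le_succ n) (hPge (n+1))
  have h1 : ZgeSet A x ((P (n+1)).length) = Set.univ := hT _ hTn
  have h2 : ZgeSet A x ((P (n+1)).length) = ({i (P n ++ [eZ n])}ᶜ : Set ℤ) := by
    unfold ZgeSet
    rw [hinp (n+1), hPsucc n]
    exact hZ _
  rw [h1] at h2
  have : i (P n ++ [eZ n]) ∈ (Set.univ : Set ℤ) := trivial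
  rw [h2] at this
  exact this rfl
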